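/- The group presented by AK(n) = ⟨a, b | aⁿ b⁻⁽ⁿ⁺¹⁾, a b a b⁻¹ a⁻¹ b⁻¹⟩ is trivial for every n ≥ 1. Equivalently, in the free group F on {a,b}, the normal closure of {aⁿ*b⁻⁽ⁿ⁺¹⁾, a*b*a*b⁻¹*a⁻¹*b⁻¹} is all of F. -/

import Mathlib

namespace Stmt6

abbrev F := FreeGroup Bool

def a : F := FreeGroup.of true
def b : F := FreeGroup.of false

theorem ak_n_trivial (n : ℕ) (hn : 1 ≤ n) :
    Subgroup.normalClosure
        ({a ^ n * (b ^ (n + 1))⁻¹, a * b * a * b⁻¹ * a⁻¹ * b⁻¹} : Set F) = ⊤ := by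
  set S : Set F := {a ^ n * (b ^ (n + 1))⁻¹, a * b * a * b⁻¹ * a⁻¹ * b⁻¹} with hS
  set N := Subgroup.normalClosure S with hN
  let π := QuotientGroup.mk' N
  have hr1 : π (a ^ n * (b ^ (n + 1))⁻¹) = 1 := by
    rw [QuotientGroup.mk'_apply, QuotientGroup.eq_one_iff]
    exact Subgroup.subset_normalClosure (Set.mem_insert _ _)
  have hr2 : π (a * b * a * b⁻¹ * a⁻¹ * b⁻¹) = 1 := by
    rw [QuotientGroup.mk'_apply, QuotientGroup.eq_one_iff]
    exact Subgroup.subset_normalClosure (Set.mem_insert_of_mem _ rfl)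
  set A := π a with hA'
  set B := π b with hB'
  have h1 : A ^ n = B ^ (n + 1) := by
    have := hr1
    simp only [map_mul, map_pow, map_inv] at this
    rwa [mul_inv_eq_one] at this
  have h2 : A * B * A = B * A * B := by
    have := hr2
    simp only [map_mul, map_inv] at this
    rw [← hA', ← hB'] at this
    calc A * B * A = (A * B * A * B⁻¹ * A⁻¹ * B⁻¹) * (B * A * B) := by group
      _ = B * A * B := by rw [this]; group
  -- A^n commutes with B
  have hcommB : Commute (A ^ n) B := by
    rw [h1]; exact (Commute.refl B).pow_left (n + 1)
  have hc : Commute (A ^ n) (A * B) :=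
    Commute.mul_right ((Commute.refl A).pow_left n) hcommB
  have hconj : (A * B) * A * (A * B)⁻¹ = B := by
    rw [mul_inv_eq_iff_eq_mul, h2]
    group
  have key : B ^ (n + 1) = A ^ n * B := by
    calc B ^ (n + 1) = ((A * B) * A * (A * B)⁻¹) ^ (n + 1) := by rw [hconj]
      _ = (A * B) * A ^ (n + 1) * (A * B)⁻¹ := by rw [conj_pow]
      _ = (A * B) * (A ^ n * A) * (A * B)⁻¹ := by rw [pow_succ]
      _ = ((A * B) * A ^ n * (A * B)⁻¹) * ((A * B) * A * (A * B)⁻¹) := by group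
      _ = A ^ n * B := by rw [hconj, ← hc.eq]; group
  have hB1 : B = 1 := by
    rw [h1] at key
    exact (left_eq_mul.mp key)
  have hA1 : A = 1 := by
    have := h2
    rw [hB1, mul_one, one_mul, mul_one] at this
    exact right_eq_mul.mp this.symm
  rw [Subgroup.eq_top_iff']
  intro x
  have hx : π x = 1 := by
    induction x using FreeGroup.induction_on with
    | C1 => simp
    | of t =>
      cases t
      · exact hB1
      · exact hA1
    | inv_of t h => rw [map_inv, h, inv_one]
    | mul x y hx hy => rw [map_mul, hx, hy, one_mul]
  rwa [QuotientGroup.mk'_apply, QuotientGroup.eq_one_iff] at hx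

end Stmt6
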